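/- Let Φ be a reversible bijection of phase space, ρ a nonnegative F-invariant function, and for k ≥ 1 define Σ^{(k)}(z) = min(1, max_{1 ≤ j ≤ k} ρ(Φ^j(z))/ρ(z)) (assuming ρ(z) > 0 everywhere), p^{(k)}(z) = Σ^{(k)}(z) − Σ^{(k−1)}(z) with Σ^{(0)} = 0. Then for every z and every k with 1 ≤ k ≤ K+1, ρ(z)·p^{(k)}(z) = ρ(F(Φ^k(z)))·p^{(k)}(F(Φ^k(z))). -/

import Mathlib

private lemma minmax_arith (a b c : ℝ) :
    min a (max c b) - min a b = min c (max a b) - min c b := by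
  rcases le_total a b with h1 | h1 <;> rcases le_total a c with h2 | h2 <;>
    rcases le_total b c with h3 | h3 <;>
    simp [min_def, max_def] <;> split_ifs <;> linarith

theorem key_identity_modified_detailed_balance (d K : ℕ) (hd : 1 ≤ d)
    (Φ : ((Fin d → ℝ) × (Fin d → ℝ)) ≃ ((Fin d → ℝ) × (Fin d → ℝ)))
    (F : (Fin d → ℝ) × (Fin d → ℝ) → (Fin d → ℝ) × (Fin d → ℝ))
    (hF : ∀ z, F z = (z.1, -z.2))
    (hrev : ∀ z, Φ.symm z = F (Φ (F z)))
    (ρ : (Fin d → ℝ) × (Fin d → ℝ) → ℝ)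
    (hρpos : ∀ z, 0 < ρ z)
    (hρF : ∀ z, ρ (F z) = ρ z)
    (S : ℕ → ((Fin d → ℝ) × (Fin d → ℝ)) → ℝ)
    (hS0 : ∀ z, S 0 z = 0)
    (hS : ∀ k (hk : 1 ≤ k) z,
      S k z = min 1 ((Finset.Icc 1 k).sup' (Finset.nonempty_Icc.mpr hk)
        fun j => ρ ((⇑Φ)^[j] z) / ρ z)) :
    ∀ z, ∀ k, 1 ≤ k → k ≤ K + 1 →
      ρ z * (S k z - S (k - 1) z) =
        ρ (F ((⇑Φ)^[k] z)) *
          (S k (F ((⇑Φ)^[k] z)) - S (k - 1) (F ((⇑Φ)^[k] z))) := by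
  have hFF : ∀ z, F (F z) = z := by intro z; simp [hF]
  have hΦF : ∀ w, Φ (F w) = F (Φ.symm w) := by
    intro w; rw [hrev w, hFF]
  -- general product formula
  have hmul : ∀ (w : (Fin d → ℝ) × (Fin d → ℝ)) (j : ℕ) (hj : 1 ≤ j),
      ρ w * S j w = min (ρ w) ((Finset.Icc 1 j).sup'
        (Finset.nonempty_Icc.mpr hj) fun i => ρ ((⇑Φ)^[i] w)) := by
    intro w j hj
    rw [hS j hj w, mul_min_of_nonneg _ _ (hρpos w).le, mul_one]
    congr 1
    rw [Finset.comp_sup'_eq_sup'_comp _ (fun x => ρ w * x)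
      (fun x y => mul_max_of_nonneg x y (hρpos w).le)]
    apply Finset.sup'_congr _ rfl
    intro i _
    have hne : ρ w ≠ 0 := (hρpos w).ne'
    simp only [Function.comp_apply]
    field_simp
  intro z k hk1 _
  set z' := F ((⇑Φ)^[k] z) with hz'
  have hiter : ∀ j, j ≤ k → (⇑Φ)^[j] z' = F ((⇑Φ)^[k - j] z) := by
    intro j hj
    induction j with
    | zero => simp [hz']
    | succ j ih =>
      have hj' : j ≤ k := Nat.le_of_succ_le hj
      rw [Function.iterate_succ_apply', ih hj', hΦF]
      congr 1
      have hkj : k - j = (k - (j + 1)) + 1 := by omega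
      rw [hkj, Function.iterate_succ_apply', Equiv.symm_apply_apply]
  have hρiter : ∀ j, j ≤ k → ρ ((⇑Φ)^[j] z') = ρ ((⇑Φ)^[k - j] z) := by
    intro j hj; rw [hiter j hj, hρF]
  have hρz' : ρ z' = ρ ((⇑Φ)^[k] z) := by rw [hz', hρF]
  -- sup over z' equals reindexed sup over z
  have hsup : ∀ j (hj : 1 ≤ j), j ≤ k →
      ((Finset.Icc 1 j).sup' (Finset.nonempty_Icc.mpr hj)
        fun i => ρ ((⇑Φ)^[i] z')) =
      ((Finset.Icc (k - j) (k - 1)).sup'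
        (Finset.nonempty_Icc.mpr (by omega))
        fun i => ρ ((⇑Φ)^[i] z)) := by
    intro j hj hjk
    apply le_antisymm
    · apply Finset.sup'_le
      intro i hi
      simp only [Finset.mem_Icc] at hi
      rw [hρiter i (le_trans hi.2 hjk)]
      exact Finset.le_sup' (fun i => ρ ((⇑Φ)^[i] z))
        (by simp only [Finset.mem_Icc]; omega)
    · apply Finset.sup'_le
      intro i hi
      simp only [Finset.mem_Icc] at hi
      have h1 : ρ ((⇑Φ)^[i] z) = ρ ((⇑Φ)^[k - (k - i)] z) := by
        congr 2; omega
      rw [h1, ← hρiter (k - i) (by omega)]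
      exact Finset.le_sup' (fun i => ρ ((⇑Φ)^[i] z'))
        (by simp only [Finset.mem_Icc]; omega)
  rcases eq_or_lt_of_le hk1 with hk | hk
  · -- k = 1
    subst hk
    simp only [Nat.sub_self, hS0, sub_zero]
    rw [hmul z 1 le_rfl, hmul z' 1 le_rfl, hρz']
    rw [hsup 1 le_rfl le_rfl]
    simp [Finset.Icc_self, min_comm]
  · -- k ≥ 2
    have hk2 : 2 ≤ k := hk
    have hk1' : 1 ≤ k - 1 := by omega
    have hne : (Finset.Icc 1 (k-1)).Nonempty := Finset.nonempty_Icc.mpr hk1'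
    set a := ρ z with ha
    set b := (Finset.Icc 1 (k-1)).sup' hne (fun i => ρ ((⇑Φ)^[i] z)) with hb
    set c := ρ ((⇑Φ)^[k] z) with hc
    -- Icc 1 k = insert k (Icc 1 (k-1))
    have hIk : Finset.Icc 1 k = insert k (Finset.Icc 1 (k-1)) := by
      ext x; simp only [Finset.mem_insert, Finset.mem_Icc]; omega
    have hI0 : Finset.Icc 0 (k-1) = insert 0 (Finset.Icc 1 (k-1)) := by
      ext x; simp only [Finset.mem_insert, Finset.mem_Icc]; omega
    have e1 : ρ z * S k z = min a (max c b) := by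
      rw [hmul z k hk1]
      congr 1
      rw [Finset.sup'_congr (Finset.nonempty_Icc.mpr hk1) hIk (fun _ _ => rfl),
        Finset.sup'_insert]
    have e2 : ρ z * S (k-1) z = min a b := by
      rw [hmul z (k-1) hk1']
    have e3 : ρ z' * S k z' = min c (max a b) := by
      rw [hmul z' k hk1, hρz']
      congr 1
      rw [hsup k hk1 le_rfl]
      have hset : Finset.Icc (k - k) (k - 1) = insert 0 (Finset.Icc 1 (k-1)) := by
        ext x; simp only [Finset.mem_insert, Finset.mem_Icc]; omega
      rw [Finset.sup'_congr (Finset.nonempty_Icc.mpr (by omega)) hset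
        (fun _ _ => rfl), Finset.sup'_insert]
      simp only [Function.iterate_zero, id_eq]
      rfl
    have e4 : ρ z' * S (k-1) z' = min c b := by
      rw [hmul z' (k-1) hk1', hρz']
      congr 1
      rw [hsup (k-1) hk1' (by omega)]
      have hset : Finset.Icc (k - (k-1)) (k - 1) = Finset.Icc 1 (k-1) := by
        ext x; simp only [Finset.mem_Icc]; omega
      rw [Finset.sup'_congr (Finset.nonempty_Icc.mpr (by omega)) hset
        (fun _ _ => rfl)]
    rw [mul_sub, mul_sub, e1, e2, e3, e4]
    exact minmax_arith a b c
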